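/- Let G be a finite simple graph and let S, T ⊆ V(G) be disjoint sets with no edge between a vertex of S and a vertex of T, such that at least one restricted (S,T)-separator exists. Then there exist minimum-size restricted (S,T)-separators P⁻ (closest) and P⁺ (farthest) such that every minimum-size restricted (S,T)-separator P satisfies R_G(S,P⁻) ⊆ R_G(S,P) ⊆ R_G(S,P⁺). -/

import Mathlib

open SimpleGraph

/-- `u` can reach `v` in `G` by a walk whose support stays inside `A`. -/
def ReachIn {V : Type} (G : SimpleGraph V) (A : Set V) (u v : V) : Prop :=
  ∃ w : G.Walk u v, ∀ x ∈ w.support, x ∈ A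

/-- The set of vertices reachable in `G − P` from a vertex of `S \ P`. -/
def reachSet {V : Type} (G : SimpleGraph V) (S P : Set V) : Set V :=
  {v | ∃ s ∈ S \ P, ReachIn G Pᶜ s v}

/-- `P` is an unrestricted `(S,T)`-separator: no vertex of `S \ P` reaches a
vertex of `T \ P` in `G − P`. -/
def IsSep {V : Type} (G : SimpleGraph V) (S T P : Set V) : Prop :=
  ∀ s ∈ S \ P, ∀ t ∈ T \ P, ¬ ReachIn G Pᶜ s t

/-- A restricted `(S,T)`-separator additionally avoids `S ∪ T`. -/
def IsRestrictedSep {V : Type} (G : SimpleGraph V) (S T P : Set V) : Prop :=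
  IsSep G S T P ∧ P ∩ (S ∪ T) = ∅

/-- A minimum-size restricted `(S,T)`-separator. -/
def IsMinRestrictedSep {V : Type} (G : SimpleGraph V) (S T P : Set V) : Prop :=
  IsRestrictedSep G S T P ∧ ∀ Q : Set V, IsRestrictedSep G S T Q → P.ncard ≤ Q.ncard

namespace Stmt4Aux

variable {V : Type}

/-- external boundary of A -/
def bdry (G : SimpleGraph V) (A : Set V) : Set V :=
  {v | v ∉ A ∧ ∃ u ∈ A, G.Adj u v}

lemma bdry_disjoint {G : SimpleGraph V} {A : Set V} {v : V} (h : v ∈ bdry G A) : v ∉ A := h.1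

lemma walk_stays {G : SimpleGraph V} {A : Set V} {u v : V} (w : G.Walk u v)
    (hu : u ∈ A) (hB : ∀ x ∈ w.support, x ∉ bdry G A) : ∀ x ∈ w.support, x ∈ A := by
  induction w with
  | nil => simpa using hu
  | @cons a b c h p ih =>
    intro x hx
    have hbA : b ∈ A := by
      by_contra hb
      exact hB b (by simp) ⟨hb, a, hu, h⟩
    rcases List.mem_cons.mp (by simpa using hx) with rfl | hx'
    · exact hu
    · exact ih hbA (fun y hy => hB y (by simp [hy])) x hx'

lemma reach_closed {G : SimpleGraph V} {S P : Set V} {v u : V}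
    (hv : v ∈ reachSet G S P) (h : G.Adj v u) (hu : u ∉ P) : u ∈ reachSet G S P := by
  obtain ⟨s, hs, w, hw⟩ := hv
  refine ⟨s, hs, w.concat h, ?_⟩
  intro x hx
  rw [Walk.support_concat, List.mem_append] at hx
  rcases hx with h1 | h2
  · exact hw x h1
  · simp at h2; subst h2; exact hu

lemma support_reach {G : SimpleGraph V} {S P : Set V} {u v : V} (w : G.Walk u v)
    (hw : ∀ x ∈ w.support, x ∉ P) (hu : u ∈ reachSet G S P) :
    ∀ x ∈ w.support, x ∈ reachSet G S P := by
  induction w with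
  | nil => simpa using hu
  | @cons a b c h p ih =>
    intro x hx
    have hb : b ∈ reachSet G S P := reach_closed hu h (hw b (by simp))
    rcases List.mem_cons.mp (by simpa using hx) with rfl | hx'
    · exact hu
    · exact ih (fun y hy => hw y (by simp [hy])) hb x hx'

lemma mem_reach_self {G : SimpleGraph V} {S P : Set V} {s : V} (hs : s ∈ S) (hsP : s ∉ P) :
    s ∈ reachSet G S P :=
  ⟨s, ⟨hs, hsP⟩, Walk.nil, by simpa using hsP⟩

lemma reach_subset_compl {G : SimpleGraph V} {S P : Set V} : reachSet G S P ⊆ Pᶜ := by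
  rintro v ⟨s, _, w, hw⟩
  exact hw v (Walk.end_mem_support w)

lemma bdry_reach_subset {G : SimpleGraph V} {S P : Set V} :
    bdry G (reachSet G S P) ⊆ P := by
  rintro v ⟨hv, u, hu, hadj⟩
  by_contra hvP
  exact hv (reach_closed hu hadj hvP)

lemma sep_of_bdry {G : SimpleGraph V} {S T A : Set V} (hSA : S ⊆ A)
    (hTA : ∀ t ∈ T, t ∉ A) : IsSep G S T (bdry G A) := by
  rintro s hs t ht ⟨w, hw⟩
  have := walk_stays w (hSA hs.1) (fun x hx => hw x hx)
  exact hTA t ht.1 (this t (Walk.end_mem_support w))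

lemma reach_bdry_subset {G : SimpleGraph V} {S A : Set V} (hSA : S ⊆ A) :
    reachSet G S (bdry G A) ⊆ A := by
  rintro v ⟨s, hs, w, hw⟩
  exact walk_stays w (hSA hs.1) (fun x hx => hw x hx) v (Walk.end_mem_support w)

lemma T_not_reach {G : SimpleGraph V} {S T P : Set V} (hP : IsRestrictedSep G S T P)
    {t : V} (ht : t ∈ T) : t ∉ reachSet G S P := by
  rintro ⟨s, hs, hr⟩
  have htP : t ∉ P := fun h => by
    have : t ∈ P ∩ (S ∪ T) := ⟨h, Or.inr ht⟩
    rw [hP.2] at this; exact this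
  exact hP.1 s hs t ⟨ht, htP⟩ hr

lemma S_subset_reach {G : SimpleGraph V} {S T P : Set V} (hP : IsRestrictedSep G S T P) :
    S ⊆ reachSet G S P := by
  intro s hs
  have hsP : s ∉ P := fun h => by
    have : s ∈ P ∩ (S ∪ T) := ⟨h, Or.inl hs⟩
    rw [hP.2] at this; exact this
  exact mem_reach_self hs hsP

lemma restricted_of_subset {S T B : Set V} {P Q : Set V}
    (hB : B ⊆ P ∪ Q) (hP : P ∩ (S ∪ T) = ∅) (hQ : Q ∩ (S ∪ T) = ∅) : B ∩ (S ∪ T) = ∅ := by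
  ext x
  simp only [Set.mem_inter_iff, Set.mem_empty_iff_false, iff_false, not_and]
  intro hxB hx
  rcases hB hxB with h | h
  · have : x ∈ P ∩ (S ∪ T) := ⟨h, hx⟩; rw [hP] at this; exact this
  · have : x ∈ Q ∩ (S ∪ T) := ⟨h, hx⟩; rw [hQ] at this; exact this

/-- Key uncrossing lemma. -/
lemma uncross [Fintype V] {G : SimpleGraph V} {S T : Set V} {P Q : Set V}
    (hP : IsMinRestrictedSep G S T P) (hQ : IsMinRestrictedSep G S T Q) :
    ∃ M J : Set V, IsMinRestrictedSep G S T M ∧ IsMinRestrictedSep G S T J ∧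
      reachSet G S M ⊆ reachSet G S P ∩ reachSet G S Q ∧
      reachSet G S P ∪ reachSet G S Q ⊆ reachSet G S J := by
  set X := reachSet G S P with hX
  set Y := reachSet G S Q with hY
  have hSX : S ⊆ X := S_subset_reach hP.1
  have hSY : S ⊆ Y := S_subset_reach hQ.1
  have hTX : ∀ t ∈ T, t ∉ X := fun t ht => T_not_reach hP.1 ht
  have hTY : ∀ t ∈ T, t ∉ Y := fun t ht => T_not_reach hQ.1 ht
  set B1 := bdry G (X ∩ Y) with hB1
  set B2 := bdry G (X ∪ Y) with hB2
  have hbX : bdry G X ⊆ P := bdry_reach_subset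
  have hbY : bdry G Y ⊆ Q := bdry_reach_subset
  have hB1sub : B1 ⊆ bdry G X ∪ bdry G Y := by
    rintro v ⟨hv, u, hu, hadj⟩
    by_cases hvx : v ∈ X
    · refine Or.inr ⟨fun hvy => hv ⟨hvx, hvy⟩, u, hu.2, hadj⟩
    · exact Or.inl ⟨hvx, u, hu.1, hadj⟩
  have hB2sub : B2 ⊆ bdry G X ∪ bdry G Y := by
    rintro v ⟨hv, u, hu, hadj⟩
    rcases hu with hu | hu
    · exact Or.inl ⟨fun h => hv (Or.inl h), u, hu, hadj⟩
    · exact Or.inr ⟨fun h => hv (Or.inr h), u, hu, hadj⟩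
  have hB12 : B1 ∩ B2 ⊆ bdry G X ∩ bdry G Y := by
    rintro v ⟨⟨hv1, u, hu, hadj⟩, hv2, _⟩
    exact ⟨⟨fun h => hv2 (Or.inl h), u, hu.1, hadj⟩, ⟨fun h => hv2 (Or.inr h), u, hu.2, hadj⟩⟩
  -- B1, B2 are restricted separators
  have hrB1 : IsRestrictedSep G S T B1 := by
    refine ⟨sep_of_bdry (fun s hs => ⟨hSX hs, hSY hs⟩) (fun t ht h => hTX t ht h.1), ?_⟩
    exact restricted_of_subset (fun v hv => by
      rcases hB1sub hv with h | h
      · exact Or.inl (hbX h)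
      · exact Or.inr (hbY h)) hP.1.2 hQ.1.2
  have hrB2 : IsRestrictedSep G S T B2 := by
    refine ⟨sep_of_bdry (fun s hs => Or.inl (hSX hs))
      (fun t ht h => h.elim (hTX t ht) (hTY t ht)), ?_⟩
    exact restricted_of_subset (fun v hv => by
      rcases hB2sub hv with h | h
      · exact Or.inl (hbX h)
      · exact Or.inr (hbY h)) hP.1.2 hQ.1.2
  -- counting
  have hcount : B1.ncard + B2.ncard ≤ P.ncard + Q.ncard := by
    have h1 : (B1 ∪ B2).ncard + (B1 ∩ B2).ncard = B1.ncard + B2.ncard :=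
      Set.ncard_union_add_ncard_inter _ _ (Set.toFinite _) (Set.toFinite _)
    have h2 : (bdry G X ∪ bdry G Y).ncard + (bdry G X ∩ bdry G Y).ncard
        = (bdry G X).ncard + (bdry G Y).ncard :=
      Set.ncard_union_add_ncard_inter _ _ (Set.toFinite _) (Set.toFinite _)
    have h3 : (B1 ∪ B2).ncard ≤ (bdry G X ∪ bdry G Y).ncard :=
      Set.ncard_le_ncard (Set.union_subset hB1sub hB2sub) (Set.toFinite _)
    have h4 : (B1 ∩ B2).ncard ≤ (bdry G X ∩ bdry G Y).ncard :=
      Set.ncard_le_ncard hB12 (Set.toFinite _)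
    have h5 : (bdry G X).ncard ≤ P.ncard := Set.ncard_le_ncard hbX (Set.toFinite _)
    have h6 : (bdry G Y).ncard ≤ Q.ncard := Set.ncard_le_ncard hbY (Set.toFinite _)
    omega
  have hPQ : P.ncard = Q.ncard := le_antisymm (hP.2 Q hQ.1) (hQ.2 P hP.1)
  have hkB1 : P.ncard ≤ B1.ncard := hP.2 B1 hrB1
  have hkB2 : P.ncard ≤ B2.ncard := hP.2 B2 hrB2
  have hmB1 : IsMinRestrictedSep G S T B1 := by
    refine ⟨hrB1, fun R hR => ?_⟩
    have := hP.2 R hR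
    omega
  have hmB2 : IsMinRestrictedSep G S T B2 := by
    refine ⟨hrB2, fun R hR => ?_⟩
    have := hP.2 R hR
    omega
  refine ⟨B1, B2, hmB1, hmB2, reach_bdry_subset (fun s hs => ⟨hSX hs, hSY hs⟩), ?_⟩
  -- X ∪ Y ⊆ reachSet G S B2
  rintro v (hv | hv)
  · obtain ⟨s, hs, w, hw⟩ := hv
    have hsup : ∀ x ∈ w.support, x ∈ X := support_reach w (fun x hx => hw x hx)
      (mem_reach_self hs.1 hs.2)
    refine ⟨s, ⟨hs.1, fun h => (bdry_disjoint h) (Or.inl (hSX hs.1))⟩, w, ?_⟩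
    intro x hx
    exact fun h => (bdry_disjoint h) (Or.inl (hsup x hx))
  · obtain ⟨s, hs, w, hw⟩ := hv
    have hsup : ∀ x ∈ w.support, x ∈ Y := support_reach w (fun x hx => hw x hx)
      (mem_reach_self hs.1 hs.2)
    refine ⟨s, ⟨hs.1, fun h => (bdry_disjoint h) (Or.inr (hSY hs.1))⟩, w, ?_⟩
    intro x hx
    exact fun h => (bdry_disjoint h) (Or.inr (hsup x hx))

end Stmt4Aux

/-- Existence of the closest and farthest minimum restricted separators. -/
theorem stmt4 {V : Type} [Fintype V] (G : SimpleGraph V) (S T : Set V)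
    (hdisj : Disjoint S T) (hnonadj : ∀ s ∈ S, ∀ t ∈ T, ¬ G.Adj s t)
    (hex : ∃ P : Set V, IsRestrictedSep G S T P) :
    ∃ Pm Pp : Set V, IsMinRestrictedSep G S T Pm ∧ IsMinRestrictedSep G S T Pp ∧
      ∀ P : Set V, IsMinRestrictedSep G S T P →
        reachSet G S Pm ⊆ reachSet G S P ∧ reachSet G S P ⊆ reachSet G S Pp := by
  classical
  open Stmt4Aux in
  -- existence of a minimum restricted separator
  have hminex : ∃ P, IsMinRestrictedSep G S T P := by
    obtain ⟨n, ⟨P0, hP0, hn⟩, hmin⟩ := Nat.lt_wfRel.wf.has_min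
      {n | ∃ P, IsRestrictedSep G S T P ∧ P.ncard = n}
      (by obtain ⟨P, hP⟩ := hex; exact ⟨P.ncard, P, hP, rfl⟩)
    refine ⟨P0, hP0, fun Q hQ => ?_⟩
    by_contra h
    push_neg at h
    exact hmin Q.ncard ⟨Q, hQ, rfl⟩ (show Q.ncard < n by omega)
  -- choose Pm minimizing |reachSet| and Pp maximizing |reachSet|
  obtain ⟨nm, ⟨Pm, hPm, hnm⟩, hminm⟩ := Nat.lt_wfRel.wf.has_min
    {n | ∃ P, IsMinRestrictedSep G S T P ∧ (reachSet G S P).ncard = n}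
    (by obtain ⟨P, hP⟩ := hminex; exact ⟨_, P, hP, rfl⟩)
  obtain ⟨np, ⟨Pp, hPp, hnp⟩, hminp⟩ := Nat.lt_wfRel.wf.has_min
    {n | ∃ P, IsMinRestrictedSep G S T P ∧ Fintype.card V - (reachSet G S P).ncard = n}
    (by obtain ⟨P, hP⟩ := hminex; exact ⟨_, P, hP, rfl⟩)
  refine ⟨Pm, Pp, hPm, hPp, fun P hP => ?_⟩
  constructor
  · obtain ⟨M, J, hM, hJ, hMsub, hJsup⟩ := Stmt4Aux.uncross hPm hP
    have h1 : reachSet G S M ⊆ reachSet G S Pm := fun v hv => (hMsub hv).1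
    have h2 : ¬ (reachSet G S M).ncard < nm := hminm _ ⟨M, hM, rfl⟩
    have h3 : reachSet G S M = reachSet G S Pm :=
      Set.eq_of_subset_of_ncard_le h1 (by omega) (Set.toFinite _)
    rw [← h3]
    exact fun v hv => (hMsub hv).2
  · obtain ⟨M, J, hM, hJ, hMsub, hJsup⟩ := Stmt4Aux.uncross hPp hP
    have h1 : reachSet G S Pp ⊆ reachSet G S J := fun v hv => hJsup (Or.inl hv)
    have h2 : ¬ Fintype.card V - (reachSet G S J).ncard < np := hminp _ ⟨J, hJ, rfl⟩
    have hle1 : (reachSet G S J).ncard ≤ Fintype.card V :=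
      calc (reachSet G S J).ncard ≤ (Set.univ : Set V).ncard :=
            Set.ncard_le_ncard (Set.subset_univ _) (Set.toFinite _)
        _ = Fintype.card V := by rw [Set.ncard_univ, Nat.card_eq_fintype_card]
    have hle2 : (reachSet G S Pp).ncard ≤ (reachSet G S J).ncard :=
      Set.ncard_le_ncard h1 (Set.toFinite _)
    have h3 : reachSet G S Pp = reachSet G S J :=
      Set.eq_of_subset_of_ncard_le h1 (by omega) (Set.toFinite _)
    rw [h3]
    exact fun v hv => hJsup (Or.inr hv)
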